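/- There exists δ₀ with 0 < δ₀ < π/4 such that for every δ ∈ (0, δ₀) and every t ∈ [δ, π/2 − δ], the function ε₀(t) = (t − δ)³ · (12(π − 3δ − t)·cos δ − (π − 4δ)(2π − 5δ − 3t)·sin δ) / (3(π − 4δ)³) satisfies iteratedDeriv 2 ε₀ t ≥ 0 (i.e. ε₀ is convex on [δ, π/2 − δ] for all sufficiently small δ > 0). -/

import Mathlib

open Real

/-- The explicit polynomial middle piece of the profile-modification function. -/
noncomputable def eps0 (δ t : ℝ) : ℝ :=
  (t - δ) ^ 3 *
    (12 * (π - 3 * δ - t) * Real.cos δ - (π - 4 * δ) * (2 * π - 5 * δ - 3 * t) * Real.sin δ) /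
    (3 * (π - 4 * δ) ^ 3)

lemma second_deriv_cubic (a A B D t : ℝ) :
    iteratedDeriv 2 (fun t => (t - a) ^ 3 * (A - B * t) / D) t
      = (6 * (t - a) * (A - B * t) - 6 * B * (t - a) ^ 2) / D := by
  have h1 : ∀ x : ℝ, HasDerivAt (fun t => (t - a) ^ 3 * (A - B * t) / D)
      ((3 * (x - a) ^ 2 * (A - B * x) + (x - a) ^ 3 * (-B)) / D) x := by
    intro x
    have hu : HasDerivAt (fun t : ℝ => (t - a) ^ 3) (3 * (x - a) ^ 2) x := by
      simpa using ((hasDerivAt_id x).sub_const a).fun_pow 3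
    have hv : HasDerivAt (fun t : ℝ => A - B * t) (-B) x := by
      simpa using ((hasDerivAt_id x).const_mul B).const_sub A
    exact (hu.mul hv).div_const D
  have h2 : deriv (fun t => (t - a) ^ 3 * (A - B * t) / D)
      = fun x => (3 * (x - a) ^ 2 * (A - B * x) + (x - a) ^ 3 * (-B)) / D := by
    funext x; exact (h1 x).deriv
  rw [iteratedDeriv_succ, iteratedDeriv_one, h2]
  have hu2 : HasDerivAt (fun x : ℝ => (x - a) ^ 2) (2 * (t - a)) t := by
    simpa using ((hasDerivAt_id t).sub_const a).fun_pow 2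
  have hu3 : HasDerivAt (fun x : ℝ => (x - a) ^ 3) (3 * (t - a) ^ 2) t := by
    simpa using ((hasDerivAt_id t).sub_const a).fun_pow 3
  have hv : HasDerivAt (fun x : ℝ => A - B * x) (-B) t := by
    simpa using ((hasDerivAt_id t).const_mul B).const_sub A
  have h3 := (((hu2.const_mul 3).mul hv).add (hu3.mul_const (-B))).div_const D
  have h4 : (6 * (t - a) * (A - B * t) - 6 * B * (t - a) ^ 2) / D
      = (3 * (2 * (t - a)) * (A - B * t) + 3 * (t - a) ^ 2 * (-B) + 3 * (t - a) ^ 2 * (-B)) / D := by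
    ring
  rw [h4]
  exact h3.deriv

/-- For all sufficiently small `δ > 0`, the function `ε₀` is convex on `[δ, π/2 - δ]`:
its second derivative is nonnegative there. -/
theorem stmt_11 :
    ∃ δ₀ : ℝ, 0 < δ₀ ∧ δ₀ < π / 4 ∧
      ∀ δ ∈ Set.Ioo (0 : ℝ) δ₀, ∀ t ∈ Set.Icc δ (π / 2 - δ),
        0 ≤ iteratedDeriv 2 (eps0 δ) t := by
  have hπ3 : (3 : ℝ) < π := Real.pi_gt_three
  have hπ4 : π < 3.15 := by linarith [Real.pi_lt_d2]
  refine ⟨1/2, by norm_num, by linarith, ?_⟩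
  rintro δ ⟨hδ0, hδ2⟩ t ⟨ht1, ht2⟩
  set A : ℝ := 12 * (π - 3 * δ) * Real.cos δ - (π - 4 * δ) * (2 * π - 5 * δ) * Real.sin δ with hA
  set B : ℝ := 12 * Real.cos δ - 3 * (π - 4 * δ) * Real.sin δ with hB
  set D : ℝ := 3 * (π - 4 * δ) ^ 3 with hD
  have heq : eps0 δ = fun t => (t - δ) ^ 3 * (A - B * t) / D := by
    funext x
    simp only [eps0, hA, hB, hD]
    ring_nf
  rw [heq, second_deriv_cubic]
  have hπδ : 0 < π - 4 * δ := by linarith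
  have hDpos : 0 < D := by positivity
  -- sin and cos bounds
  have hsin0 : 0 ≤ Real.sin δ := Real.sin_nonneg_of_nonneg_of_le_pi (le_of_lt hδ0) (by linarith)
  have hsinδ : Real.sin δ ≤ δ := Real.sin_le (le_of_lt hδ0)
  have hcos : 1 - δ ^ 2 / 2 ≤ Real.cos δ := Real.one_sub_sq_div_two_le_cos
  have hBpos : 0 ≤ B := by
    have h1 : 3 * (π - 4 * δ) * Real.sin δ ≤ 3 * π * δ := by
      have : 3 * (π - 4 * δ) * Real.sin δ ≤ 3 * π * Real.sin δ := by nlinarith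
      nlinarith
    have h2 : (10 : ℝ) ≤ 12 * Real.cos δ := by nlinarith
    have h3 : 3 * π * δ < 3 * 3.15 * (1/2) := by nlinarith
    rw [hB]; nlinarith
  -- key identity: A + B*δ - 2*B*t = (π-4δ)^2 * sin δ + 2*B*(π/2 - δ - t)
  have hkey : A + B * δ - 2 * B * t = (π - 4 * δ) ^ 2 * Real.sin δ + 2 * B * (π / 2 - δ - t) := by
    simp only [hA, hB]; ring
  have hlin : 0 ≤ A + B * δ - 2 * B * t := by
    rw [hkey]
    have h1 : 0 ≤ (π - 4 * δ) ^ 2 * Real.sin δ := by positivity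
    have h2 : 0 ≤ 2 * B * (π / 2 - δ - t) := by
      apply mul_nonneg (by linarith) (by linarith)
    linarith
  have hnum : 0 ≤ 6 * (t - δ) * (A - B * t) - 6 * B * (t - δ) ^ 2 := by
    have : 6 * (t - δ) * (A - B * t) - 6 * B * (t - δ) ^ 2
        = 6 * (t - δ) * (A + B * δ - 2 * B * t) := by ring
    rw [this]
    apply mul_nonneg (by linarith) hlin
  exact div_nonneg hnum hDpos.le
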